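/- arXiv:2605.12561 — 4 statements merged into one kernel-verified Lean document; each statement's English description precedes it below -/
import Mathlib

section
/- Let n be a positive integer, P a symmetric positive-definite n×n real matrix, and M an n×n real matrix such that P − Mᵀ P M is positive definite. Then every eigenvalue of M (viewed as a matrix over ℂ) has absolute value strictly less than 1. -/
open Matrix

/-- The real part of the complex quadratic form of a mapped real matrix. -/
lemma re_quad_form {n : ℕ} (Q : Matrix (Fin n) (Fin n) ℝ) (v : Fin n → ℂ) :
    (star v ⬝ᵥ (Q.map (algebraMap ℝ ℂ)) *ᵥ v).re =
      (fun i => (v i).re) ⬝ᵥ Q *ᵥ (fun i => (v i).re) +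
      (fun i => (v i).im) ⬝ᵥ Q *ᵥ (fun i => (v i).im) := by
  simp only [dotProduct, mulVec, Pi.star_apply, Complex.re_sum, map_apply]
  rw [← Finset.sum_add_distrib]
  refine Finset.sum_congr rfl fun i _ => ?_
  simp only [Finset.mul_sum, Complex.re_sum, ← Finset.sum_add_distrib]
  refine Finset.sum_congr rfl fun j _ => ?_
  simp only [Complex.mul_re, Complex.mul_im, Complex.star_def, Complex.conj_re,
    Complex.conj_im, RingHom.coe_coe, Complex.coe_algebraMap, Complex.ofReal_re,
    Complex.ofReal_im]
  ring

/-- Positive-definiteness transfers to positivity of the real part of the complex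
quadratic form. -/
lemma re_quad_form_pos {n : ℕ} {Q : Matrix (Fin n) (Fin n) ℝ} (hQ : Q.PosDef)
    {v : Fin n → ℂ} (hv : v ≠ 0) :
    0 < (star v ⬝ᵥ (Q.map (algebraMap ℝ ℂ)) *ᵥ v).re := by
  rw [re_quad_form]
  set a : Fin n → ℝ := fun i => (v i).re with ha
  set b : Fin n → ℝ := fun i => (v i).im with hb
  have hab : a ≠ 0 ∨ b ≠ 0 := by
    by_contra h
    push_neg at h
    apply hv
    funext i
    have h1 := congrFun h.1 i
    have h2 := congrFun h.2 i
    simp only [ha, hb, Pi.zero_apply] at h1 h2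
    exact Complex.ext h1 h2
  have hsa : 0 ≤ a ⬝ᵥ Q *ᵥ a := by simpa using hQ.posSemidef.dotProduct_mulVec_nonneg a
  have hsb : 0 ≤ b ⬝ᵥ Q *ᵥ b := by simpa using hQ.posSemidef.dotProduct_mulVec_nonneg b
  rcases hab with h | h
  · have := hQ.dotProduct_mulVec_pos h
    simp only [star_trivial] at this
    linarith
  · have := hQ.dotProduct_mulVec_pos h
    simp only [star_trivial] at this
    linarith

/-- If `P` is symmetric positive definite and `P − Mᵀ P M` is positive
definite, then every complex eigenvalue of `M` (root of the characteristic polynomial of `M`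
regarded as a matrix over `ℂ`) has absolute value strictly less than `1`. -/
theorem spectral_radius_lt_one_of_lyapunov
    (n : ℕ) (hn : 0 < n) (P M : Matrix (Fin n) (Fin n) ℝ)
    (hP : P.PosDef) (hdisc : (P - Mᵀ * P * M).PosDef) :
    ∀ μ : ℂ, ((M.map (algebraMap ℝ ℂ)).charpoly.IsRoot μ) → ‖μ‖ < 1 := by
  intro μ hroot
  set Mc := M.map (algebraMap ℝ ℂ) with hMc
  set Pc := P.map (algebraMap ℝ ℂ) with hPc
  -- turn the root into an eigenvector
  have hdet : (Matrix.scalar (Fin n) μ - Mc).det = 0 := by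
    have h := hroot
    rw [Polynomial.IsRoot, Matrix.charpoly, _root_.eval_det, matPolyEquiv_charmatrix] at h
    simpa using h
  obtain ⟨v, hv, hMv⟩ := (Matrix.exists_mulVec_eq_zero_iff).mpr hdet
  have heig : Mc *ᵥ v = μ • v := by
    rw [sub_mulVec] at hMv
    have h2 : Matrix.scalar (Fin n) μ *ᵥ v = μ • v := by
      funext i
      simp [Matrix.scalar_apply, mulVec_diagonal]
    rw [h2] at hMv
    exact (sub_eq_zero.mp hMv).symm
  -- conjugate transpose of Mc is its transpose
  have hMcH : Mcᴴ = Mcᵀ := by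
    ext i j
    simp [hMc, conjTranspose_apply, Complex.star_def]
  -- the key quadratic identities
  set c : ℂ := star v ⬝ᵥ Pc *ᵥ v with hc
  have hcpos : 0 < c.re := re_quad_form_pos hP hv
  have hmap : (P - Mᵀ * P * M).map (algebraMap ℝ ℂ) = Pc - Mcᵀ * Pc * Mc := by
    simp only [hPc, hMc, ← RingHom.mapMatrix_apply, map_sub, _root_.map_mul]
    simp [RingHom.mapMatrix_apply, Matrix.transpose_map]
  have hdpos : 0 < (star v ⬝ᵥ ((P - Mᵀ * P * M).map (algebraMap ℝ ℂ)) *ᵥ v).re :=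
    re_quad_form_pos hdisc hv
  have hquad : star v ⬝ᵥ (Mcᵀ * Pc * Mc) *ᵥ v = star (Mc *ᵥ v) ⬝ᵥ Pc *ᵥ (Mc *ᵥ v) := by
    rw [star_mulVec, hMcH, ← dotProduct_mulVec, mulVec_mulVec, mulVec_mulVec,
      Matrix.mul_assoc]
  have hquad2 : star (Mc *ᵥ v) ⬝ᵥ Pc *ᵥ (Mc *ᵥ v) = (starRingEnd ℂ) μ * μ * c := by
    rw [heig, star_smul, smul_dotProduct, mulVec_smul, dotProduct_smul]
    simp [hc, Complex.star_def]
    ring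
  have hd : (star v ⬝ᵥ ((P - Mᵀ * P * M).map (algebraMap ℝ ℂ)) *ᵥ v) =
      c - (starRingEnd ℂ) μ * μ * c := by
    rw [hmap, sub_mulVec, dotProduct_sub, hquad, hquad2]
  rw [hd] at hdpos
  have hnormSq : ((starRingEnd ℂ) μ * μ * c).re = Complex.normSq μ * c.re := by
    simp only [Complex.mul_re, Complex.mul_im, Complex.conj_re, Complex.conj_im,
      Complex.normSq_apply]
    ring
  have hre : (c - (starRingEnd ℂ) μ * μ * c).re = c.re - Complex.normSq μ * c.re := by
    rw [Complex.sub_re, hnormSq]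
  rw [hre] at hdpos
  have hlt : Complex.normSq μ < 1 := by nlinarith
  have hsq := Complex.sq_norm μ
  nlinarith [norm_nonneg μ]
end

section
/- Let n and m be positive integers, A an n×n real matrix, B an n×m real matrix, and Q, R symmetric positive-definite matrices. Suppose the symmetric positive-definite matrix P solves the continuous-time algebraic Riccati equation Aᵀ P + P A − P B R⁻¹ Bᵀ P + Q = 0, set K = R⁻¹ Bᵀ P, and let M(τ) = exp(A τ) − (∫₀^τ exp(A s) ds)·B·K. For x ∈ ℝⁿ define ΔV(τ) = (M(τ)·x)ᵀ P (M(τ)·x) − xᵀ P x. Then ΔV(0) = 0, ΔV is differentiable, and its derivative at τ = 0 equals −xᵀ (Q + Kᵀ R K) x, which is strictly negative whenever x ≠ 0. -/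
open Matrix MeasureTheory

/-- The ZOH closed-loop transition matrix
`M(τ) = exp(A τ) − (∫₀^τ exp(A s) ds) · B · K`, with entrywise Bochner integral. -/
noncomputable def zohMatrix {n m : ℕ} (A : Matrix (Fin n) (Fin n) ℝ)
    (B : Matrix (Fin n) (Fin m) ℝ) (K : Matrix (Fin m) (Fin n) ℝ) (τ : ℝ) :
    Matrix (Fin n) (Fin n) ℝ :=
  NormedSpace.exp (τ • A) -
    (Matrix.of fun i j => ∫ s in (0:ℝ)..τ, (NormedSpace.exp (s • A)) i j) * B * K

section aux

attribute [local instance] Matrix.linftyOpNormedAddCommGroup Matrix.linftyOpNormedRing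
  Matrix.linftyOpNormedAlgebra

/-- Each entry of `τ ↦ exp (τ • A)` is differentiable, with derivative the entry of
`exp (t • A) * A`. -/
lemma exp_entry_hasDerivAt {n : ℕ} (A : Matrix (Fin n) (Fin n) ℝ) (t : ℝ) (i j : Fin n) :
    HasDerivAt (fun τ : ℝ => NormedSpace.exp (τ • A) i j)
      ((NormedSpace.exp (t • A) * A) i j) t := by
  have h := hasDerivAt_exp_smul_const (𝕂 := ℝ) A t
  have h2 := (Matrix.entryLinearMap ℝ ℝ i j).toContinuousLinearMap.hasFDerivAt.comp_hasDerivAt t h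
  exact h2

end aux

/-- dot-product transpose juggling. -/
lemma dot_transpose_aux {n : ℕ} (N P : Matrix (Fin n) (Fin n) ℝ) (x : Fin n → ℝ) :
    x ⬝ᵥ (Nᵀ * P) *ᵥ x = (N *ᵥ x) ⬝ᵥ P *ᵥ x := by
  rw [← Matrix.mulVec_mulVec, Matrix.dotProduct_mulVec x Nᵀ, Matrix.vecMul_transpose]

/-- Under the CARE, with `K = R⁻¹ Bᵀ P` and
`ΔV(τ) = (M(τ)x)ᵀ P (M(τ)x) − xᵀ P x`:  `ΔV(0) = 0`, `ΔV` is differentiable, its derivative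
at `τ = 0` equals `−xᵀ (Q + Kᵀ R K) x`, and this value is strictly negative whenever `x ≠ 0`. -/
theorem care_deltaV_deriv_at_zero
    (n m : ℕ) (hn : 0 < n) (hm : 0 < m)
    (A : Matrix (Fin n) (Fin n) ℝ) (B : Matrix (Fin n) (Fin m) ℝ)
    (Q P : Matrix (Fin n) (Fin n) ℝ) (R : Matrix (Fin m) (Fin m) ℝ)
    (hQ : Q.PosDef) (hR : R.PosDef) (hP : P.PosDef)
    (hCARE : Aᵀ * P + P * A - P * B * R⁻¹ * Bᵀ * P + Q = 0)
    (K : Matrix (Fin m) (Fin n) ℝ) (hK : K = R⁻¹ * Bᵀ * P)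
    (x : Fin n → ℝ)
    (ΔV : ℝ → ℝ)
    (hΔV : ΔV = fun τ =>
      (zohMatrix A B K τ *ᵥ x) ⬝ᵥ P *ᵥ (zohMatrix A B K τ *ᵥ x) - x ⬝ᵥ P *ᵥ x) :
    ΔV 0 = 0 ∧ (∀ τ : ℝ, DifferentiableAt ℝ ΔV τ) ∧
      HasDerivAt ΔV (-(x ⬝ᵥ (Q + Kᵀ * R * K) *ᵥ x)) 0 ∧
      (x ≠ 0 → -(x ⬝ᵥ (Q + Kᵀ * R * K) *ᵥ x) < 0) := by
  classical
  set C : Matrix (Fin n) (Fin n) ℝ := B * K with hC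
  -- the matrix at τ = 0 is the identity
  have hzoh0 : zohMatrix A B K 0 = 1 := by
    have h0 : (Matrix.of fun i j : Fin n =>
        ∫ s in (0:ℝ)..(0:ℝ), (NormedSpace.exp (s • A)) i j) = (0 : Matrix (Fin n) (Fin n) ℝ) := by
      ext i j
      simp [intervalIntegral.integral_same]
    unfold zohMatrix
    rw [h0, Matrix.zero_mul, Matrix.zero_mul, zero_smul, NormedSpace.exp_zero, sub_zero]
  -- entrywise derivative of the matrix entries
  have hcont : ∀ i k : Fin n, Continuous fun s : ℝ => NormedSpace.exp (s • A) i k := by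
    intro i k
    exact continuous_iff_continuousAt.2 fun s => (exp_entry_hasDerivAt A s i k).continuousAt
  have hG : ∀ (t : ℝ) (i k : Fin n),
      HasDerivAt (fun τ : ℝ => ∫ s in (0:ℝ)..τ, NormedSpace.exp (s • A) i k)
        (NormedSpace.exp (t • A) i k) t :=
    fun t i k => ((hcont i k).integral_hasStrictDerivAt 0 t).hasDerivAt
  have hM : ∀ (t : ℝ) (i j : Fin n),
      HasDerivAt (fun τ => zohMatrix A B K τ i j)
        ((NormedSpace.exp (t • A) * A) i j
          - ∑ k, NormedSpace.exp (t • A) i k * C k j) t := by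
    intro t i j
    have hrepr : ∀ τ : ℝ, zohMatrix A B K τ i j = NormedSpace.exp (τ • A) i j -
        ∑ k, (∫ s in (0:ℝ)..τ, NormedSpace.exp (s • A) i k) * C k j := by
      intro τ
      show (NormedSpace.exp (τ • A) -
        (Matrix.of fun i j => ∫ s in (0:ℝ)..τ, (NormedSpace.exp (s • A)) i j) * B * K) i j = _
      rw [Matrix.sub_apply, Matrix.mul_assoc, ← hC, Matrix.mul_apply]
      rfl
    have h1 := exp_entry_hasDerivAt A t i j
    have h2 : HasDerivAt
        (fun τ : ℝ => ∑ k, (∫ s in (0:ℝ)..τ, NormedSpace.exp (s • A) i k) * C k j)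
        (∑ k, NormedSpace.exp (t • A) i k * C k j) t :=
      HasDerivAt.fun_sum fun k _ => (hG t i k).mul_const _
    exact (h1.sub h2).congr_of_eventuallyEq (Filter.Eventually.of_forall hrepr)
  -- derivative of the components of `M(τ) x`
  have hy : ∀ (t : ℝ) (i : Fin n),
      HasDerivAt (fun τ => ∑ j, zohMatrix A B K τ i j * x j)
        (∑ j, ((NormedSpace.exp (t • A) * A) i j
          - ∑ k, NormedSpace.exp (t • A) i k * C k j) * x j) t :=
    fun t i => HasDerivAt.fun_sum fun j _ => (hM t i j).mul_const (x j)
  -- the rewritten form of ΔV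
  have hΔV' : ΔV = fun τ =>
      (∑ i, (∑ j, zohMatrix A B K τ i j * x j) *
        (∑ j, P i j * ∑ k, zohMatrix A B K τ j k * x k)) - x ⬝ᵥ P *ᵥ x := by
    rw [hΔV]
    rfl
  -- ΔV has a derivative everywhere
  have hDV : ∀ t : ℝ, HasDerivAt ΔV
      ((∑ i, ((∑ j, ((NormedSpace.exp (t • A) * A) i j
            - ∑ k, NormedSpace.exp (t • A) i k * C k j) * x j) *
          (∑ j, P i j * ∑ k, zohMatrix A B K t j k * x k)
        + (∑ j, zohMatrix A B K t i j * x j) *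
          (∑ j, P i j * ∑ k, ((NormedSpace.exp (t • A) * A) j k
            - ∑ l, NormedSpace.exp (t • A) j l * C l k) * x k)))) t := by
    intro t
    rw [hΔV']
    exact (HasDerivAt.fun_sum fun i _ =>
      (hy t i).mul (HasDerivAt.fun_sum fun j _ => ((hy t j).const_mul (P i j)))).sub_const _
  -- key matrix identity from the CARE
  have hPT : Pᵀ = P := by
    have := hP.isHermitian.eq
    rwa [Matrix.conjTranspose_eq_transpose_of_trivial] at this
  have hRT : Rᵀ = R := by
    have := hR.isHermitian.eq
    rwa [Matrix.conjTranspose_eq_transpose_of_trivial] at this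
  have hdet : IsUnit R.det := isUnit_iff_ne_zero.mpr hR.det_pos.ne'
  have hRinv : R⁻¹ * R = 1 := Matrix.nonsing_inv_mul R hdet
  have hRinvT : (R⁻¹)ᵀ = R⁻¹ := by rw [Matrix.transpose_nonsing_inv, hRT]
  have hKT : Kᵀ = P * B * R⁻¹ := by
    rw [hK, Matrix.transpose_mul, Matrix.transpose_mul, Matrix.transpose_transpose, hPT, hRinvT,
      Matrix.mul_assoc]
  have hKRK : Kᵀ * R * K = P * B * R⁻¹ * Bᵀ * P := by
    rw [hKT, hK, Matrix.mul_assoc (P * B) R⁻¹ R, hRinv, Matrix.mul_one]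
    simp only [Matrix.mul_assoc]
  have hCP : Cᵀ * P = P * B * R⁻¹ * Bᵀ * P := by
    rw [hC, Matrix.transpose_mul, hKT]
  have hPC : P * C = P * B * R⁻¹ * Bᵀ * P := by
    rw [hC, hK]
    simp only [Matrix.mul_assoc]
  have h4 : Aᵀ * P + P * A = P * B * R⁻¹ * Bᵀ * P - Q := by
    have h := eq_neg_of_add_eq_zero_left hCARE
    rw [sub_eq_iff_eq_add] at h
    rw [h]
    abel
  have hkey : (A - C)ᵀ * P + P * (A - C) = -(Q + Kᵀ * R * K) := by
    rw [hKRK]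
    calc (A - C)ᵀ * P + P * (A - C)
        = (Aᵀ * P + P * A) - (Cᵀ * P + P * C) := by rw [Matrix.transpose_sub]; noncomm_ring
      _ = (P * B * R⁻¹ * Bᵀ * P - Q)
          - (P * B * R⁻¹ * Bᵀ * P + P * B * R⁻¹ * Bᵀ * P) := by rw [h4, hCP, hPC]
      _ = -(Q + P * B * R⁻¹ * Bᵀ * P) := by abel
  -- the derivative value at 0
  have hDV0 : HasDerivAt ΔV (-(x ⬝ᵥ (Q + Kᵀ * R * K) *ᵥ x)) 0 := by
    have h := hDV 0
    convert h using 1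
    have hexp0 : NormedSpace.exp ((0:ℝ) • A) = (1 : Matrix (Fin n) (Fin n) ℝ) := by
      rw [zero_smul, NormedSpace.exp_zero]
    have hRHS : (∑ i, ((∑ j, ((NormedSpace.exp ((0:ℝ) • A) * A) i j
            - ∑ k, NormedSpace.exp ((0:ℝ) • A) i k * C k j) * x j) *
          (∑ j, P i j * ∑ k, zohMatrix A B K 0 j k * x k)
        + (∑ j, zohMatrix A B K 0 i j * x j) *
          (∑ j, P i j * ∑ k, ((NormedSpace.exp ((0:ℝ) • A) * A) j k
            - ∑ l, NormedSpace.exp ((0:ℝ) • A) j l * C l k) * x k)))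
        = ((A - C) *ᵥ x) ⬝ᵥ P *ᵥ x + x ⬝ᵥ P *ᵥ ((A - C) *ᵥ x) := by
      simp [hexp0, hzoh0, Matrix.one_apply, dotProduct, Matrix.mulVec, Matrix.sub_apply,
        ite_mul, Finset.sum_ite_eq, sub_mul, Finset.sum_sub_distrib, Finset.sum_add_distrib]
    rw [hRHS, ← dotProduct_neg, ← Matrix.neg_mulVec, ← hkey, Matrix.add_mulVec,
      dotProduct_add, dot_transpose_aux, ← Matrix.mulVec_mulVec]
  refine ⟨?_, fun τ => (hDV τ).differentiableAt, hDV0, ?_⟩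
  · rw [hΔV]
    simp [hzoh0]
  · intro hx
    have hsemi : (Kᵀ * R * K).PosSemidef := by
      have := hR.posSemidef.conjTranspose_mul_mul_same K
      rwa [Matrix.conjTranspose_eq_transpose_of_trivial] at this
    have hpos : (Q + Kᵀ * R * K).PosDef := hQ.add_posSemidef hsemi
    have := hpos.dotProduct_mulVec_pos hx
    simp only [star_trivial] at this
    linarith
end

section
/- Let n and m be positive integers, A an n×n real matrix, B an n×m real matrix, and Q, R symmetric positive-definite matrices. Suppose the symmetric positive-definite matrix P solves the continuous-time algebraic Riccati equation Aᵀ P + P A − P B R⁻¹ Bᵀ P + Q = 0, set K = R⁻¹ Bᵀ P, and let M(τ) = exp(A τ) − (∫₀^τ exp(A s) ds)·B·K. Fix constants 0 < c ≤ c'. Then there exists τ⁺ > 0, independent of x, such that for every x ∈ ℝⁿ with c ≤ xᵀ P x ≤ c' and every τ ∈ (0, τ⁺), one has (M(τ)·x)ᵀ P (M(τ)·x) < xᵀ P x. -/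
open Matrix MeasureTheory

attribute [local instance] Matrix.linftyOpSemiNormedRing Matrix.linftyOpNormedRing
  Matrix.linftyOpNormedAlgebra

open NormedSpace in
lemma aux_zoh_zero {n m : ℕ} (A : Matrix (Fin n) (Fin n) ℝ) (B : Matrix (Fin n) (Fin m) ℝ)
    (K : Matrix (Fin m) (Fin n) ℝ) : zohMatrix A B K 0 = 1 := by
  have h0 : (Matrix.of fun (i j : Fin n) => (0:ℝ)) = 0 := rfl
  simp [zohMatrix, exp_zero, intervalIntegral.integral_same, h0]

open NormedSpace in
lemma aux_hasDerivAt_zoh {n m : ℕ} (A : Matrix (Fin n) (Fin n) ℝ) (B : Matrix (Fin n) (Fin m) ℝ)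
    (K : Matrix (Fin m) (Fin n) ℝ) : HasDerivAt (zohMatrix A B K) (A - B * K) 0 := by
  have hexp : HasDerivAt (fun τ : ℝ => exp (τ • A)) A 0 := by
    have h := hasDerivAt_exp_smul_const (𝕂 := ℝ) A (0 : ℝ)
    simp [exp_zero] at h
    exact h
  have hEij : ∀ i j : Fin n, HasDerivAt
      (fun τ : ℝ => ∫ s in (0:ℝ)..τ, (exp (s • A)) i j)
      ((1 : Matrix (Fin n) (Fin n) ℝ) i j) 0 := by
    intro i j
    have hc : Continuous (fun s : ℝ => (exp (s • A)) i j) :=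
      (exp_continuous.comp (continuous_id.smul continuous_const)).matrix_elem i j
    simpa [exp_zero] using (hc.integral_hasStrictDerivAt 0 0).hasDerivAt
  let ofCLM : ((Fin n) → (Fin n) → ℝ) →L[ℝ] Matrix (Fin n) (Fin n) ℝ :=
    LinearMap.toContinuousLinearMap
      { toFun := fun v => Matrix.of v
        map_add' := fun _ _ => rfl
        map_smul' := fun _ _ => rfl }
  have hpi : HasDerivAt (fun τ : ℝ => (fun i j => ∫ s in (0:ℝ)..τ, (exp (s • A)) i j :
      (Fin n) → (Fin n) → ℝ)) (fun i j => (1 : Matrix (Fin n) (Fin n) ℝ) i j) 0 := by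
    rw [hasDerivAt_pi]
    intro i
    rw [hasDerivAt_pi]
    intro j
    exact hEij i j
  have hE : HasDerivAt (fun τ : ℝ => (Matrix.of fun i j =>
      ∫ s in (0:ℝ)..τ, (exp (s • A)) i j : Matrix (Fin n) (Fin n) ℝ))
      (1 : Matrix (Fin n) (Fin n) ℝ) 0 :=
    ofCLM.hasFDerivAt.comp_hasDerivAt 0 hpi
  have hEBK : HasDerivAt (fun τ : ℝ => (Matrix.of fun i j =>
      ∫ s in (0:ℝ)..τ, (exp (s • A)) i j : Matrix (Fin n) (Fin n) ℝ) * (B * K))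
      (B * K) 0 := by have h := hE.mul_const (B * K); simp at h; exact h
  have := hexp.sub hEBK
  unfold zohMatrix
  simp only [Matrix.mul_assoc]
  exact this

lemma aux_hasDerivAt_quadmat {n m : ℕ} (A P : Matrix (Fin n) (Fin n) ℝ)
    (B : Matrix (Fin n) (Fin m) ℝ) (K : Matrix (Fin m) (Fin n) ℝ) :
    HasDerivAt (fun τ => (zohMatrix A B K τ)ᵀ * P * zohMatrix A B K τ)
      ((A - B * K)ᵀ * P + P * (A - B * K)) 0 := by
  have hM := aux_hasDerivAt_zoh A B K
  let tCLM : Matrix (Fin n) (Fin n) ℝ →L[ℝ] Matrix (Fin n) (Fin n) ℝ :=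
    LinearMap.toContinuousLinearMap
      ((Matrix.transposeLinearEquiv (Fin n) (Fin n) ℝ ℝ).toLinearMap)
  have hMT : HasDerivAt (fun τ => (zohMatrix A B K τ)ᵀ) (A - B * K)ᵀ 0 :=
    tCLM.hasFDerivAt.comp_hasDerivAt 0 hM
  have h1 : HasDerivAt (fun τ => (zohMatrix A B K τ)ᵀ * P) ((A - B * K)ᵀ * P) 0 :=
    hMT.mul_const P
  have h2 := h1.mul hM
  simp only [aux_zoh_zero, Matrix.transpose_one, Matrix.one_mul, Matrix.mul_one] at h2
  exact h2

lemma aux_entry_le_norm {n : ℕ} (M : Matrix (Fin n) (Fin n) ℝ) (i j : Fin n) : |M i j| ≤ ‖M‖ := by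
  rw [Matrix.linfty_opNorm_def]
  calc |M i j| ≤ ∑ k, ‖M i k‖₊ := by
        rw [← Real.norm_eq_abs]
        exact_mod_cast Finset.single_le_sum (f := fun k => ‖M i k‖₊) (by simp) (Finset.mem_univ j)
    _ ≤ _ := by exact_mod_cast Finset.le_sup (f := fun i => ∑ j, ‖M i j‖₊) (Finset.mem_univ i)

lemma aux_posDef_quadform_lower_bound {n : ℕ} (hn : 0 < n) (Q : Matrix (Fin n) (Fin n) ℝ)
    (hQ : Q.PosDef) : ∃ ε > 0, ∀ x : Fin n → ℝ, ε * (x ⬝ᵥ x) ≤ x ⬝ᵥ Q *ᵥ x := by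
  have hgc : Continuous fun v : Fin n → ℝ => v ⬝ᵥ Q *ᵥ v := by
    simp only [dotProduct, mulVec]
    exact continuous_finset_sum _ fun i _ => (continuous_apply i).mul
      (continuous_finset_sum _ fun j _ => continuous_const.mul (continuous_apply j))
  have hsc : Continuous fun v : Fin n → ℝ => v ⬝ᵥ v := by
    simp only [dotProduct]
    exact continuous_finset_sum _ fun i _ => (continuous_apply i).mul (continuous_apply i)
  set S : Set (Fin n → ℝ) := {v | v ⬝ᵥ v = 1} with hS
  have hclosed : IsClosed S := isClosed_eq hsc continuous_const
  have hsub : S ⊆ Metric.closedBall 0 1 := by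
    intro v hv
    rw [Metric.mem_closedBall, dist_zero_right]
    rw [pi_norm_le_iff_of_nonneg zero_le_one]
    intro i
    rw [Real.norm_eq_abs, abs_le_one_iff_mul_self_le_one]
    calc v i * v i ≤ ∑ j, v j * v j :=
          Finset.single_le_sum (f := fun j => v j * v j) (fun j _ => mul_self_nonneg _)
            (Finset.mem_univ i)
      _ = 1 := hv
  have hcomp : IsCompact S := (isCompact_closedBall 0 1).of_isClosed_subset hclosed hsub
  have hne : S.Nonempty := by
    refine ⟨Pi.single ⟨0, hn⟩ 1, ?_⟩
    simp [hS, dotProduct, Pi.single_apply]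
  obtain ⟨y₀, hy₀S, hmin⟩ := hcomp.exists_isMinOn hne hgc.continuousOn
  have hy₀ne : y₀ ≠ 0 := by
    intro h
    rw [hS] at hy₀S
    simp [h] at hy₀S
  have hεpos : 0 < y₀ ⬝ᵥ Q *ᵥ y₀ := by simpa using hQ.dotProduct_mulVec_pos hy₀ne
  refine ⟨y₀ ⬝ᵥ Q *ᵥ y₀, hεpos, fun x => ?_⟩
  rcases eq_or_ne x 0 with rfl | hx
  · simp
  · have hxx : 0 < x ⬝ᵥ x := by
      rcases (Finset.sum_nonneg fun i _ => mul_self_nonneg (x i)).lt_or_eq with h | h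
      · exact h
      · exact absurd ((dotProduct_self_eq_zero).mp h.symm) hx
    set r : ℝ := Real.sqrt (x ⬝ᵥ x) with hr
    have hrpos : 0 < r := Real.sqrt_pos.mpr hxx
    have hr2 : r * r = x ⬝ᵥ x := Real.mul_self_sqrt hxx.le
    have hyS : (r⁻¹ • x) ∈ S := by
      rw [hS]
      simp only [Set.mem_setOf_eq, smul_dotProduct, dotProduct_smul, smul_eq_mul]
      field_simp
      rw [sq, hr2]
    have hle : y₀ ⬝ᵥ Q *ᵥ y₀ ≤ (r⁻¹ • x) ⬝ᵥ Q *ᵥ (r⁻¹ • x) := hmin hyS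
    have hval : (r⁻¹ • x) ⬝ᵥ Q *ᵥ (r⁻¹ • x) = (r⁻¹ * r⁻¹) * (x ⬝ᵥ Q *ᵥ x) := by
      rw [smul_dotProduct, mulVec_smul, dotProduct_smul]
      ring_nf
    rw [hval] at hle
    have h2 : (y₀ ⬝ᵥ Q *ᵥ y₀) * (x ⬝ᵥ x) ≤ ((r⁻¹ * r⁻¹) * (x ⬝ᵥ Q *ᵥ x)) * (x ⬝ᵥ x) :=
      mul_le_mul_of_nonneg_right hle hxx.le
    calc (y₀ ⬝ᵥ Q *ᵥ y₀) * (x ⬝ᵥ x) ≤ ((r⁻¹ * r⁻¹) * (x ⬝ᵥ Q *ᵥ x)) * (x ⬝ᵥ x) := h2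
      _ = x ⬝ᵥ Q *ᵥ x := by
          rw [← hr2]
          field_simp

lemma aux_quad_transform {n : ℕ} (M P : Matrix (Fin n) (Fin n) ℝ) (x : Fin n → ℝ) :
    (M *ᵥ x) ⬝ᵥ P *ᵥ (M *ᵥ x) = x ⬝ᵥ (Mᵀ * P * M) *ᵥ x := by
  rw [Matrix.mul_assoc, ← Matrix.mulVec_mulVec, Matrix.dotProduct_mulVec x,
    Matrix.vecMul_transpose, Matrix.mulVec_mulVec]

/-- Under the CARE with `K = R⁻¹ Bᵀ P`, for fixed `0 < c ≤ c'` there exists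
a uniform `τ⁺ > 0` such that for every `x` with `c ≤ xᵀ P x ≤ c'` and every `τ ∈ (0, τ⁺)`,
`(M(τ)x)ᵀ P (M(τ)x) < xᵀ P x`. -/
theorem exists_uniform_admissible_interval
    (n m : ℕ) (hn : 0 < n) (hm : 0 < m)
    (A : Matrix (Fin n) (Fin n) ℝ) (B : Matrix (Fin n) (Fin m) ℝ)
    (Q P : Matrix (Fin n) (Fin n) ℝ) (R : Matrix (Fin m) (Fin m) ℝ)
    (hQ : Q.PosDef) (hR : R.PosDef) (hP : P.PosDef)
    (hCARE : Aᵀ * P + P * A - P * B * R⁻¹ * Bᵀ * P + Q = 0)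
    (K : Matrix (Fin m) (Fin n) ℝ) (hK : K = R⁻¹ * Bᵀ * P)
    (c c' : ℝ) (hc : 0 < c) (hcc' : c ≤ c') :
    ∃ τplus : ℝ, 0 < τplus ∧
      ∀ x : Fin n → ℝ, c ≤ x ⬝ᵥ P *ᵥ x → x ⬝ᵥ P *ᵥ x ≤ c' →
        ∀ τ : ℝ, 0 < τ → τ < τplus →
          (zohMatrix A B K τ *ᵥ x) ⬝ᵥ P *ᵥ (zohMatrix A B K τ *ᵥ x) < x ⬝ᵥ P *ᵥ x := by
  obtain ⟨ε, hε, hQlow⟩ := aux_posDef_quadform_lower_bound hn Q hQ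
  -- transpose facts
  have hPt : Pᵀ = P := by
    rw [← Matrix.conjTranspose_eq_transpose_of_trivial]; exact hP.isHermitian.eq
  have hRt : Rᵀ = R := by
    rw [← Matrix.conjTranspose_eq_transpose_of_trivial]; exact hR.isHermitian.eq
  have hRinvT : (R⁻¹)ᵀ = R⁻¹ := by rw [Matrix.transpose_nonsing_inv, hRt]
  set S : Matrix (Fin n) (Fin n) ℝ := P * B * R⁻¹ * Bᵀ * P with hSdef
  have hKT : Kᵀ = P * B * R⁻¹ := by
    rw [hK, Matrix.transpose_mul, Matrix.transpose_mul, Matrix.transpose_transpose,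
      hPt, hRinvT, Matrix.mul_assoc]
  set L : Matrix (Fin n) (Fin n) ℝ := (A - B * K)ᵀ * P + P * (A - B * K) with hLdef
  have h1 : (A - B * K)ᵀ * P = Aᵀ * P - S := by
    rw [Matrix.transpose_sub, Matrix.sub_mul, Matrix.transpose_mul, hKT]
  have h2 : P * (A - B * K) = P * A - S := by
    rw [Matrix.mul_sub, hK, hSdef]
    congr 1
    simp only [Matrix.mul_assoc]
  have hLval : L = -(Q + S) := by
    rw [hLdef, h1, h2,
      show Aᵀ * P - S + (P * A - S) = (Aᵀ * P + P * A - S + Q) - (Q + S) from by abel,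
      hCARE, zero_sub]
  -- S is positive semidefinite
  have hSpsd : S.PosSemidef := by
    have h := (hR.inv.posSemidef).mul_mul_conjTranspose_same (P * B)
    have he : (P * B) * R⁻¹ * (P * B)ᴴ = S := by
      rw [Matrix.conjTranspose_eq_transpose_of_trivial, Matrix.transpose_mul, hPt, hSdef]
      simp only [Matrix.mul_assoc]
    rwa [he] at h
  have hSquad : ∀ x : Fin n → ℝ, 0 ≤ x ⬝ᵥ S *ᵥ x := by
    intro x
    simpa using hSpsd.dotProduct_mulVec_nonneg x
  -- the uniform bound from differentiability
  have hG := aux_hasDerivAt_quadmat A P B K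
  rw [← hLdef] at hG
  replace hG := hasDerivAt_iff_tendsto_slope.mp hG
  set δ : ℝ := ε / (2 * n) with hδdef
  have hnR : (0:ℝ) < n := by exact_mod_cast hn
  have hδ : 0 < δ := by positivity
  have hev := Metric.tendsto_nhds.mp hG δ hδ
  rw [eventually_nhdsWithin_iff, Metric.eventually_nhds_iff] at hev
  obtain ⟨τp, hτp, hball⟩ := hev
  refine ⟨τp, hτp, ?_⟩
  intro x hcx hcx' τ hτ0 hττ
  have hτne : τ ≠ 0 := ne_of_gt hτ0
  have hx0 : x ≠ 0 := by
    intro h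
    rw [h] at hcx
    simp at hcx
    linarith
  have hxx : 0 < x ⬝ᵥ x := by
    rcases (Finset.sum_nonneg fun i _ => mul_self_nonneg (x i)).lt_or_eq with h | h
    · exact h
    · exact absurd ((dotProduct_self_eq_zero).mp h.symm) hx0
  set G : ℝ → Matrix (Fin n) (Fin n) ℝ := fun τ => (zohMatrix A B K τ)ᵀ * P * zohMatrix A B K τ
    with hGdef
  have hdist : dist (slope G 0 τ) L < δ := by
    apply hball
    · rw [dist_zero_right, Real.norm_eq_abs, abs_of_pos hτ0]
      exact hττ
    · simp [hτne]
  set D : Matrix (Fin n) (Fin n) ℝ := slope G 0 τ - L with hDdef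
  have hDentry : ∀ i j, |D i j| < δ := by
    intro i j
    calc |D i j| ≤ ‖D‖ := aux_entry_le_norm D i j
      _ < δ := by rwa [hDdef, ← dist_eq_norm]
  have hG0 : G 0 = P := by
    rw [hGdef]
    simp [aux_zoh_zero]
  have hGτ : G τ = P + τ • L + τ • D := by
    have hs : slope G 0 τ = L + D := by rw [hDdef]; abel
    have : G τ = G 0 + τ • slope G 0 τ := by
      rw [slope_def_module, sub_zero, smul_inv_smul₀ hτne]
      abel
    rw [this, hs, hG0, smul_add]
    abel
  have hquad : (zohMatrix A B K τ *ᵥ x) ⬝ᵥ P *ᵥ (zohMatrix A B K τ *ᵥ x) = x ⬝ᵥ (G τ) *ᵥ x :=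
    aux_quad_transform _ P x
  rw [hquad, hGτ]
  -- expand the quadratic form
  have hexpand : x ⬝ᵥ (P + τ • L + τ • D) *ᵥ x
      = x ⬝ᵥ P *ᵥ x + τ * (x ⬝ᵥ L *ᵥ x) + τ * (x ⬝ᵥ D *ᵥ x) := by
    simp [Matrix.add_mulVec, dotProduct_add, Matrix.smul_mulVec, dotProduct_smul,
      smul_eq_mul]
  rw [hexpand]
  have hLquad : x ⬝ᵥ L *ᵥ x ≤ -(ε * (x ⬝ᵥ x)) := by
    rw [hLval, Matrix.neg_mulVec, dotProduct_neg, Matrix.add_mulVec, dotProduct_add]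
    have := hQlow x
    have := hSquad x
    linarith
  have hDquad : x ⬝ᵥ D *ᵥ x ≤ δ * (n * (x ⬝ᵥ x)) := by
    have habs : x ⬝ᵥ D *ᵥ x ≤ ∑ i, ∑ j, |x i| * |D i j| * |x j| := by
      calc x ⬝ᵥ D *ᵥ x = ∑ i, ∑ j, x i * (D i j * x j) := by
            simp [dotProduct, mulVec, Finset.mul_sum]
        _ ≤ ∑ i, ∑ j, |x i| * |D i j| * |x j| := by
            apply Finset.sum_le_sum
            intro i _
            apply Finset.sum_le_sum
            intro j _
            calc x i * (D i j * x j) ≤ |x i * (D i j * x j)| := le_abs_self _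
              _ = |x i| * |D i j| * |x j| := by rw [abs_mul, abs_mul]; ring
    have hstep : ∑ i, ∑ j, |x i| * |D i j| * |x j| ≤ δ * ((∑ i, |x i|) * (∑ j, |x j|)) := by
      rw [Finset.sum_mul_sum, Finset.mul_sum]
      apply Finset.sum_le_sum
      intro i _
      rw [Finset.mul_sum]
      apply Finset.sum_le_sum
      intro j _
      have h1 : |x i| * |D i j| * |x j| ≤ |x i| * δ * |x j| :=
        mul_le_mul_of_nonneg_right
          (mul_le_mul_of_nonneg_left (hDentry i j).le (abs_nonneg (x i))) (abs_nonneg (x j))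
      calc |x i| * |D i j| * |x j| ≤ |x i| * δ * |x j| := h1
        _ = δ * (|x i| * |x j|) := by ring
    have hcs : (∑ i, |x i|) * (∑ j, |x j|) ≤ n * (x ⬝ᵥ x) := by
      have h := sq_sum_le_card_mul_sum_sq (s := (Finset.univ : Finset (Fin n)))
        (f := fun i => |x i|)
      simp only [Finset.card_univ, Fintype.card_fin] at h
      calc (∑ i, |x i|) * (∑ j, |x j|) = (∑ i, |x i|) ^ 2 := by rw [sq]
        _ ≤ n * ∑ i, |x i| ^ 2 := h
        _ = n * (x ⬝ᵥ x) := by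
            congr 1
            simp [dotProduct, sq, abs_mul_abs_self]
    calc x ⬝ᵥ D *ᵥ x ≤ ∑ i, ∑ j, |x i| * |D i j| * |x j| := habs
      _ ≤ δ * ((∑ i, |x i|) * (∑ j, |x j|)) := hstep
      _ ≤ δ * (n * (x ⬝ᵥ x)) := by
          apply mul_le_mul_of_nonneg_left hcs hδ.le
  have hδn : δ * n = ε / 2 := by
    rw [hδdef]
    field_simp
  have hsum : x ⬝ᵥ L *ᵥ x + x ⬝ᵥ D *ᵥ x < 0 := by
    have : δ * (n * (x ⬝ᵥ x)) = (ε / 2) * (x ⬝ᵥ x) := by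
      rw [← hδn]; ring
    rw [this] at hDquad
    nlinarith
  nlinarith
end

section
/- Let n and m be positive integers, A an n×n real matrix, B an n×m real matrix, and Q, R symmetric positive-definite matrices of sizes n×n and m×m. Suppose the symmetric positive-definite matrix P solves the continuous-time algebraic Riccati equation Aᵀ P + P A − P B R⁻¹ Bᵀ P + Q = 0, and set K = R⁻¹ Bᵀ P. Then A − B K is Hurwitz: every eigenvalue of A − B K, regarded as a matrix over ℂ, has strictly negative real part. -/
open Matrix Polynomial

private lemma re_star_dot_map {k : ℕ} (L : Matrix (Fin k) (Fin k) ℝ) (v : Fin k → ℂ) :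
    (star v ⬝ᵥ (L.map (algebraMap ℝ ℂ)) *ᵥ v).re
      = (fun i => (v i).re) ⬝ᵥ L *ᵥ (fun i => (v i).re)
        + (fun i => (v i).im) ⬝ᵥ L *ᵥ (fun i => (v i).im) := by
  simp only [dotProduct, mulVec, Pi.star_apply, Matrix.map_apply, Finset.mul_sum,
    Complex.re_sum, ← Finset.sum_add_distrib]
  refine Finset.sum_congr rfl fun i _ => Finset.sum_congr rfl fun j _ => ?_
  simp [Complex.mul_re, RCLike.star_def]

private lemma posdef_map_re {k : ℕ} {L : Matrix (Fin k) (Fin k) ℝ} (hL : L.PosDef)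
    {v : Fin k → ℂ} (hv : v ≠ 0) :
    0 < (star v ⬝ᵥ (L.map (algebraMap ℝ ℂ)) *ᵥ v).re := by
  rw [re_star_dot_map]
  set x : Fin k → ℝ := fun i => (v i).re with hx
  set y : Fin k → ℝ := fun i => (v i).im with hy
  have hne : x ≠ 0 ∨ y ≠ 0 := by
    by_contra h
    push_neg at h
    apply hv
    funext i
    have h1 : (v i).re = 0 := congrFun h.1 i
    have h2 : (v i).im = 0 := congrFun h.2 i
    exact Complex.ext h1 h2
  have hxs : ∀ z : Fin k → ℝ, star z ⬝ᵥ L *ᵥ z = z ⬝ᵥ L *ᵥ z := fun z => by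
    simp [star_trivial]
  rcases hne with h | h
  · have h1 : 0 < x ⬝ᵥ L *ᵥ x := by have := hL.dotProduct_mulVec_pos h; rwa [hxs] at this
    have h2 : 0 ≤ y ⬝ᵥ L *ᵥ y := by have := hL.posSemidef.dotProduct_mulVec_nonneg y; rwa [hxs] at this
    linarith
  · have h1 : 0 ≤ x ⬝ᵥ L *ᵥ x := by have := hL.posSemidef.dotProduct_mulVec_nonneg x; rwa [hxs] at this
    have h2 : 0 < y ⬝ᵥ L *ᵥ y := by have := hL.dotProduct_mulVec_pos h; rwa [hxs] at this
    linarith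

private lemma eig_of_charpoly_root {k : ℕ} (M : Matrix (Fin k) (Fin k) ℂ) (μ : ℂ)
    (h : M.charpoly.IsRoot μ) : ∃ v : Fin k → ℂ, v ≠ 0 ∧ M *ᵥ v = μ • v := by
  have hdet : (Matrix.diagonal (fun _ : Fin k => μ) - M).det = 0 := by
    have hh := h
    rw [Polynomial.IsRoot, Matrix.charpoly, ← Polynomial.coe_evalRingHom,
      RingHom.map_det] at hh
    convert hh using 2
    ext i j
    by_cases hij : i = j <;>
      simp [hij, charmatrix_apply, Matrix.diagonal, Matrix.sub_apply]
  obtain ⟨v, hv, hv0⟩ := (Matrix.exists_mulVec_eq_zero_iff).mpr hdet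
  refine ⟨v, hv, ?_⟩
  rw [Matrix.sub_mulVec] at hv0
  have h2 : Matrix.diagonal (fun _ : Fin k => μ) *ᵥ v = μ • v := by
    ext i; simp [Matrix.mulVec_diagonal]
  rw [h2] at hv0
  exact (sub_eq_zero.mp hv0).symm

/-- If the symmetric positive-definite `P` solves the CARE
`Aᵀ P + P A − P B R⁻¹ Bᵀ P + Q = 0` with `Q, R` symmetric positive definite, and
`K = R⁻¹ Bᵀ P`, then `A − B K` is Hurwitz: every complex eigenvalue (root of the
characteristic polynomial over `ℂ`) has strictly negative real part. -/
theorem care_closed_loop_hurwitz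
    (n m : ℕ) (hn : 0 < n) (hm : 0 < m)
    (A : Matrix (Fin n) (Fin n) ℝ) (B : Matrix (Fin n) (Fin m) ℝ)
    (Q P : Matrix (Fin n) (Fin n) ℝ) (R : Matrix (Fin m) (Fin m) ℝ)
    (hQ : Q.PosDef) (hR : R.PosDef) (hP : P.PosDef)
    (hCARE : Aᵀ * P + P * A - P * B * R⁻¹ * Bᵀ * P + Q = 0) :
    ∀ μ : ℂ,
      (((A - B * (R⁻¹ * Bᵀ * P)).map (algebraMap ℝ ℂ)).charpoly.IsRoot μ) → μ.re < 0 := by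
  intro μ hroot
  set Acl : Matrix (Fin n) (Fin n) ℝ := A - B * (R⁻¹ * Bᵀ * P) with hAcl
  set L : Matrix (Fin n) (Fin n) ℝ := Q + P * B * R⁻¹ * Bᵀ * P with hLdef
  -- symmetry facts
  have hPT : Pᵀ = P := by
    have := hP.isHermitian.eq
    rwa [conjTranspose_eq_transpose_of_trivial] at this
  have hRT : Rᵀ = R := by
    have := hR.isHermitian.eq
    rwa [conjTranspose_eq_transpose_of_trivial] at this
  have hRinvT : (R⁻¹)ᵀ = R⁻¹ := by rw [transpose_nonsing_inv, hRT]
  -- Lyapunov equation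
  have hAclT : Aclᵀ = Aᵀ - P * B * R⁻¹ * Bᵀ := by
    rw [hAcl, transpose_sub, transpose_mul, transpose_mul, transpose_mul,
      transpose_transpose, hPT, hRinvT]
    noncomm_ring
    simp [Matrix.mul_assoc]
  have hLyap : Aclᵀ * P + P * Acl = -L := by
    rw [hAclT, hAcl, hLdef]
    have key : Aᵀ * P + P * A - P * B * R⁻¹ * Bᵀ * P = -Q :=
      eq_neg_of_add_eq_zero_left hCARE
    have expand : (Aᵀ - P * B * R⁻¹ * Bᵀ) * P + P * (A - B * (R⁻¹ * Bᵀ * P))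
        = (Aᵀ * P + P * A - P * B * R⁻¹ * Bᵀ * P) - P * B * R⁻¹ * Bᵀ * P := by
      noncomm_ring
      simp only [Matrix.mul_assoc]
      abel
    rw [expand, key]
    noncomm_ring
  -- L is positive definite
  have hS : (P * B * R⁻¹ * Bᵀ * P).PosSemidef := by
    have := (hR.inv.posSemidef).conjTranspose_mul_mul_same (Bᵀ * P)
    have hconv : (Bᵀ * P)ᴴ * R⁻¹ * (Bᵀ * P) = P * B * R⁻¹ * Bᵀ * P := by
      rw [conjTranspose_eq_transpose_of_trivial, transpose_mul, transpose_transpose, hPT]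
      simp [Matrix.mul_assoc]
    rwa [hconv] at this
  have hLpos : L.PosDef := hQ.add_posSemidef hS
  -- map to ℂ via the ring hom on matrices
  set f : ℝ →+* ℂ := algebraMap ℝ ℂ with hf
  have hmapT : ∀ (M : Matrix (Fin n) (Fin n) ℝ), (Mᵀ).map f = (M.map f)ᵀ := fun M => rfl
  have hLyapC : (Acl.map f)ᵀ * (P.map f) + (P.map f) * (Acl.map f) = -(L.map f) := by
    have := congrArg (fun M : Matrix (Fin n) (Fin n) ℝ => M.map f) hLyap
    have hneg : (-L).map f = -(L.map f) := by ext i j; simp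
    simpa [Matrix.map_add, Matrix.map_mul, hneg, hmapT] using this
  -- eigenvector
  obtain ⟨v, hv, hev⟩ := eig_of_charpoly_root (Acl.map f) μ hroot
  set Ac := Acl.map f with hAc
  set Pc := P.map f with hPc
  set q : ℂ := star v ⬝ᵥ Pc *ᵥ v with hq
  -- star commutes with the real matrix Ac
  have hstar : Ac *ᵥ star v = star (Ac *ᵥ v) := by
    ext i
    simp [hAc, mulVec, dotProduct, Matrix.map_apply, star_sum, hf, Complex.conj_ofReal,
      mul_comm]
  -- main scalar identity
  have e1 : star v ⬝ᵥ ((Acᵀ * Pc + Pc * Ac) *ᵥ v) = (star μ + μ) * q := by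
    rw [Matrix.add_mulVec, dotProduct_add]
    have t2 : star v ⬝ᵥ ((Pc * Ac) *ᵥ v) = μ * q := by
      rw [← Matrix.mulVec_mulVec, hev, Matrix.mulVec_smul, dotProduct_smul, hq,
        smul_eq_mul]
    have t1 : star v ⬝ᵥ ((Acᵀ * Pc) *ᵥ v) = star μ * q := by
      rw [← Matrix.mulVec_mulVec, dotProduct_mulVec, vecMul_transpose, hstar, hev,
        star_smul, smul_dotProduct, smul_eq_mul]
    rw [t1, t2]
    ring
  have e2 : star v ⬝ᵥ ((Acᵀ * Pc + Pc * Ac) *ᵥ v) = -(star v ⬝ᵥ (L.map f) *ᵥ v) := by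
    rw [hLyapC, Matrix.neg_mulVec, dotProduct_neg]
  have key : (star μ + μ) * q = -(star v ⬝ᵥ (L.map f) *ᵥ v) := by rw [← e1, e2]
  -- take real parts
  have hkey_re : (2 * μ.re) * q.re = -((star v ⬝ᵥ (L.map f) *ᵥ v).re) := by
    have h1 : star μ + μ = ((2 * μ.re : ℝ) : ℂ) := by
      rw [RCLike.star_def, add_comm, Complex.add_conj]
    have := congrArg Complex.re key
    rw [h1] at this
    simpa [Complex.mul_re, Complex.ofReal_re, Complex.ofReal_im] using this
  have hqpos : 0 < q.re := posdef_map_re hP hv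
  have hLre : 0 < (star v ⬝ᵥ (L.map f) *ᵥ v).re := posdef_map_re hLpos hv
  nlinarith
end
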